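/- Define W := {u ∈ 𝔰^⊥ ∩ 𝔭 : ⁅u, y⁆ = 0}. Then 𝔭 is the internal direct sum of W and 𝔰^{(0)} + ⁅x, 𝔤_+⁆, and W is 𝔰^{(0)}-invariant: ⁅u, W⁆ ⊆ W for every u ∈ 𝔰^{(0)}. In other words, W is an 𝔰^{(0)}-invariant graded complement to 𝔰^{(0)} + ⁅x, 𝔤_+⁆ in 𝔭. -/

import Mathlib

/-- `sAux 0 = 𝔰_{-1} = K·x`, `sAux (n+1) = 𝔰_n = {u ∈ 𝔤_n : ⁅x,u⁆ ∈ 𝔰_{n-1}}`. -/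
noncomputable def sAux {K L : Type*} [Field K] [LieRing L] [LieAlgebra K L]
    (g : ℤ → Submodule K L) (x : L) : ℕ → Submodule K L
  | 0 => Submodule.span K {x}
  | (n + 1) => g (n : ℤ) ⊓ (sAux g x n).comap (LieAlgebra.ad K L x)

/-- The subspaces `𝔰_i ⊆ 𝔤_i`. -/
noncomputable def sFun {K L : Type*} [Field K] [LieRing L] [LieAlgebra K L]
    (g : ℤ → Submodule K L) (x : L) (i : ℤ) : Submodule K L :=
  if i < -1 then ⊥ else sAux g x (i + 1).toNat

/-- The orthogonal complement `{u ∈ L : B(u, s) = 0 for all s ∈ S}` of a subspace `S`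
with respect to a bilinear form `B`. -/
def perpOf {K L : Type*} [Field K] [AddCommGroup L] [Module K L]
    (B : LinearMap.BilinForm K L) (S : Submodule K L) : Submodule K L where
  carrier := {u : L | ∀ s ∈ S, B u s = 0}
  zero_mem' := by intro s hs; simp
  add_mem' := by
    intro a b ha hb s hs
    rw [map_add, LinearMap.add_apply, ha s hs, hb s hs, add_zero]
  smul_mem' := by
    intro c a ha s hs
    rw [map_smul, LinearMap.smul_apply, ha s hs, smul_zero]

/-- The subspace `{u ∈ L : ⁅u, y⁆ = 0}`. -/
def kerRight {K L : Type*} [Field K] [LieRing L] [LieAlgebra K L] (y : L) :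
    Submodule K L where
  carrier := {u : L | ⁅u, y⁆ = 0}
  zero_mem' := by simp
  add_mem' := by intro a b ha hb; rw [Set.mem_setOf_eq, add_lie, ha, hb, add_zero]
  smul_mem' := by intro c a ha; rw [Set.mem_setOf_eq, smul_lie, ha, smul_zero]


namespace Sl2Chunk

open Polynomial

variable {K V : Type*} [Field K] [CharZero K] [AddCommGroup V] [Module K V]

lemma hshift {f hh : Module.End K V} (hf : hh * f - f * hh = (-2 : K) • f) (k : ℕ) :
    hh * f ^ k = f ^ k * hh - (2 * (k : K)) • f ^ k := by
  induction k with
  | zero => simp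
  | succ n ih =>
    have hf' : hh * f = f * hh + (-2 : K) • f := by rw [← hf]; abel
    rw [pow_succ, ← mul_assoc, ih, sub_mul, smul_mul_assoc, mul_assoc (f ^ n) hh f, hf',
      mul_add, mul_smul_comm, ← mul_assoc]
    push_cast
    match_scalars <;> ring

lemma e_mul_pow_f {e f hh : Module.End K V} (hc : e * f - f * e = hh)
    (hf : hh * f - f * hh = (-2 : K) • f) (k : ℕ) :
    e * f ^ (k + 1) = f ^ (k + 1) * e + ((k : K) + 1) • (f ^ k * (hh - (k : K) • 1)) := by
  have hc' : e * f = f * e + hh := by rw [← hc]; abel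
  have hf' : hh * f = f * hh + (-2 : K) • f := by rw [← hf]; abel
  induction k with
  | zero => simpa using hc'
  | succ n ih =>
    rw [pow_succ (M := Module.End K V) f (n + 1), ← mul_assoc, ih, add_mul, smul_mul_assoc,
      mul_assoc (f ^ (n + 1)) e f, hc', mul_assoc (f ^ n) _ f, sub_mul, smul_mul_assoc, one_mul,
      hf']
    simp only [mul_sub, mul_add, mul_smul_comm, mul_one, ← mul_assoc, ← pow_succ]
    push_cast
    match_scalars <;> ring

lemma ker_hh_stable {e hh : Module.End K V} (he : hh * e - e * hh = (2 : K) • e)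
    {v : V} (hv : e v = 0) : e (hh v) = 0 := by
  have h1 : e * hh = hh * e - (2 : K) • e := by rw [← he]; abel
  have h2 : (e * hh) v = (hh * e - (2 : K) • e) v := by rw [h1]
  simpa [Module.End.mul_apply, hv] using h2

lemma ker_aeval_stable {e hh : Module.End K V} (he : hh * e - e * hh = (2 : K) • e)
    {v : V} (hv : e v = 0) (p : Polynomial K) : e ((aeval hh p) v) = 0 := by
  have hpow : ∀ n : ℕ, e ((hh ^ n) v) = 0 := by
    intro n
    induction n with
    | zero => simpa using hv
    | succ m ihm =>
      rw [pow_succ', Module.End.mul_apply]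
      exact ker_hh_stable he ihm
  induction p using Polynomial.induction_on' with
  | add p q hp hq => simp only [map_add, LinearMap.add_apply, hp, hq, add_zero]
  | monomial n a =>
    simp [aeval_monomial, Module.End.mul_apply, Module.algebraMap_end_apply, map_smul, hpow n]

lemma kerE_poly {e f hh : Module.End K V} (hc : e * f - f * e = hh)
    (he : hh * e - e * hh = (2 : K) • e) (hf : hh * f - f * hh = (-2 : K) • f) :
    ∀ (k : ℕ) (v : V), e v = 0 → (f ^ k) v = 0 →
      (aeval hh (∏ i ∈ Finset.range k, (X - C (i : K)))) v = 0 := by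
  intro k
  induction k with
  | zero => intro v _ hv; simpa using hv
  | succ n ih =>
    intro v hev hfv
    have key0 : (0 : V) = ((n : K) + 1) • ((f ^ n) ((hh - (n : K) • 1) v)) := by
      have key := congrArg (fun A : Module.End K V => A v) (e_mul_pow_f hc hf n)
      simpa [Module.End.mul_apply, LinearMap.add_apply, LinearMap.smul_apply, hfv, hev] using key
    have hn1 : ((n : K) + 1) ≠ 0 := by
      have h0 : ((n + 1 : ℕ) : K) ≠ 0 := Nat.cast_ne_zero.mpr (Nat.succ_ne_zero n)
      push_cast at h0; exact h0
    have hfw : (f ^ n) ((hh - (n : K) • 1) v) = 0 :=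
      (smul_eq_zero.mp key0.symm).resolve_left hn1
    have hew : e ((hh - (n : K) • 1) v) = 0 := by
      have h1 := ker_hh_stable he hev
      simp [LinearMap.sub_apply, LinearMap.smul_apply, Module.End.one_apply, map_sub, map_smul,
        h1, hev]
    rw [Finset.prod_range_succ, map_mul, Module.End.mul_apply]
    have hXC : ((aeval hh) (X - C (n : K))) = hh - (n : K) • 1 := by
      rw [map_sub, aeval_X, aeval_C, Algebra.algebraMap_eq_smul_one]
    rw [hXC]
    exact ih _ hew hfw

lemma step_range {e f hh : Module.End K V} (hc : e * f - f * e = hh)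
    (hf : hh * f - f * hh = (-2 : K) • f) (m : ℕ) (u : V)
    (hev : e ((f ^ (m + 1)) u) = 0) :
    ∃ u', (hh + ((m : K) + 2) • 1) ((f ^ (m + 1)) u) = (f ^ (m + 2)) u' := by
  refine ⟨(-(((m : K) + 1)⁻¹)) • (e u), ?_⟩
  have key := congrArg (fun A : Module.End K V => A u) (e_mul_pow_f hc hf m)
  simp only [Module.End.mul_apply, LinearMap.add_apply, LinearMap.smul_apply] at key
  rw [hev] at key
  -- key : 0 = (f^{m+1}) (e u) + ((m:K)+1) • ((f^m) ((hh - m•1) u))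
  have hm1 : ((m : K) + 1) ≠ 0 := by
    have h0 : ((m + 1 : ℕ) : K) ≠ 0 := Nat.cast_ne_zero.mpr (Nat.succ_ne_zero m)
    push_cast at h0; exact h0
  -- apply f to key
  have key2 := congrArg f key
  simp only [map_zero, map_add, map_smul] at key2
  -- key2 : 0 = f ((f^{m+1}) (e u)) + (m+1) • f ((f^m) ((hh - m•1) u))
  have hcollapse : ∀ (w : V) (j : ℕ), f ((f ^ j) w) = (f ^ (j + 1)) w := by
    intro w j
    rw [pow_succ', Module.End.mul_apply]
  rw [hcollapse, hcollapse] at key2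
  -- now LHS: compute (hh + (m+2)•1) ((f^{m+1}) u) = (f^{m+1}) ((hh - m•1) u) using hshift
  have hsh := congrArg (fun A : Module.End K V => A u) (hshift hf (m + 1))
  simp only [Module.End.mul_apply, LinearMap.sub_apply, LinearMap.smul_apply] at hsh
  -- hsh : hh ((f^{m+1}) u) = (f^{m+1}) (hh u) - (2*(m+1)) • (f^{m+1}) u
  have hLHS : (hh + ((m : K) + 2) • 1) ((f ^ (m + 1)) u)
      = (f ^ (m + 1)) ((hh - (m : K) • 1) u) := by
    simp only [LinearMap.add_apply, LinearMap.smul_apply, Module.End.one_apply, hsh,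
      LinearMap.sub_apply, map_sub, map_smul]
    push_cast
    module
  rw [hLHS]
  -- from key2 : 0 = (f^{m+2}) (e u) + (m+1) • (f^{m+1}) ((hh - m•1) u)
  have : (f ^ (m + 1)) ((hh - (m : K) • 1) u)
      = (-(((m : K) + 1)⁻¹)) • ((f ^ (m + 2)) (e u)) := by
    have h3 : ((m : K) + 1) • ((f ^ (m + 1)) ((hh - (m : K) • 1) u)) = -((f ^ (m + 2)) (e u)) := by
      have := key2.symm
      -- this : (f^{m+2}) (e u) + (m+1) • (f^{m+1}) ((hh - m•1) u) = 0
      linear_combination (norm := module) this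
    have h4 := congrArg (fun w : V => (((m : K) + 1)⁻¹) • w) h3
    simpa [smul_smul, inv_mul_cancel₀ hm1] using h4
  rw [this, map_smul]

lemma ker_range_f {e f hh : Module.End K V} (hc : e * f - f * e = hh)
    (he : hh * e - e * hh = (2 : K) • e) (hf : hh * f - f * hh = (-2 : K) • f)
    (N : ℕ) (hN : f ^ N = 0) :
    ∀ v, e v = 0 → v ∈ LinearMap.range f → v = 0 := by
  rintro v hev ⟨w, rfl⟩
  set v := f w with hv
  -- chain
  have chain : ∀ m : ℕ, ∃ u,
      (aeval hh (∏ k ∈ Finset.range m, (X + C ((k : K) + 2)))) v = (f ^ (m + 1)) u := by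
    intro m
    induction m with
    | zero => exact ⟨w, by simpa using hv.symm⟩
    | succ n ihn =>
      obtain ⟨u, hu⟩ := ihn
      set vn := (aeval hh (∏ k ∈ Finset.range n, (X + C ((k : K) + 2)))) v with hvn
      have hevn : e vn = 0 := ker_aeval_stable he hev _
      have hstep := step_range hc hf n u (by rw [← hu]; exact hevn)
      obtain ⟨u', hu'⟩ := hstep
      refine ⟨u', ?_⟩
      rw [Finset.prod_range_succ, mul_comm, map_mul, Module.End.mul_apply]
      have hXC : ((aeval hh) (X + C ((n : K) + 2))) = hh + ((n : K) + 2) • 1 := by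
        rw [map_add, aeval_X, aeval_C, Algebra.algebraMap_eq_smul_one]
      rw [hXC, ← hvn, hu]
      exact hu'
  -- conclude
  obtain ⟨u, hu⟩ := chain N
  have hP : (aeval hh (∏ k ∈ Finset.range N, (X + C ((k : K) + 2)))) v = 0 := by
    rw [hu, pow_succ, Module.End.mul_apply, hN]
    simp
  have hQ : (aeval hh (∏ i ∈ Finset.range N, (X - C (i : K)))) v = 0 := by
    refine kerE_poly hc he hf N v hev ?_
    rw [hN]; simp
  have hcop : IsCoprime (∏ k ∈ Finset.range N, (X + C ((k : K) + 2)))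
      (∏ i ∈ Finset.range N, (X - C (i : K))) := by
    refine IsCoprime.prod_left fun k _ => ?_
    refine IsCoprime.prod_right fun i _ => ?_
    have : (X + C ((k : K) + 2)) = X - C (-((k : K) + 2)) := by
      rw [map_neg, sub_neg_eq_add]
    rw [this]
    refine Polynomial.isCoprime_X_sub_C_of_isUnit_sub ?_
    refine (sub_ne_zero.mpr ?_).isUnit
    intro hcontr
    have h2 : (((i + k + 2 : ℕ)) : K) = 0 := by push_cast; linear_combination -hcontr
    exact (Nat.cast_ne_zero.mpr (by omega)) h2
  obtain ⟨a, b, hab⟩ := hcop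
  have h5 : (aeval hh (a * (∏ k ∈ Finset.range N, (X + C ((k : K) + 2)))
      + b * (∏ i ∈ Finset.range N, (X - C (i : K))))) v = v := by
    rw [hab]; simp
  rw [map_add, map_mul, map_mul, LinearMap.add_apply, Module.End.mul_apply, Module.End.mul_apply,
    hP, hQ, map_zero, map_zero, add_zero] at h5
  exact h5.symm

lemma ker_range_e {e f hh : Module.End K V} (hc : e * f - f * e = hh)
    (he : hh * e - e * hh = (2 : K) • e) (hf : hh * f - f * hh = (-2 : K) • f)
    (N : ℕ) (hN : e ^ N = 0) :
    ∀ v, f v = 0 → v ∈ LinearMap.range e → v = 0 := by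
  have hf' : hh * f = f * hh + (-2 : K) • f := by rw [← hf]; abel
  have he' : hh * e = e * hh + (2 : K) • e := by rw [← he]; abel
  refine ker_range_f (e := f) (f := e) (hh := -hh) ?_ ?_ ?_ N hN
  · rw [← hc]; abel
  · rw [neg_mul, mul_neg, sub_neg_eq_add, hf']
    module
  · rw [neg_mul, mul_neg, sub_neg_eq_add, he']
    module


end Sl2Chunk

namespace GradeChunk

open scoped DirectSum

variable {K L : Type*} [Field K] [AddCommGroup L] [Module K L]
variable {g : ℤ → Submodule K L}

/-- membership in `⨆ i ≥ c, p i` -/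
lemma mem_iSup2 {p : ℤ → Submodule K L} {c i : ℤ} (hci : c ≤ i) {u : L} (hu : u ∈ p i) :
    u ∈ ⨆ j ≥ c, p j :=
  Submodule.mem_iSup_of_mem i (Submodule.mem_iSup_of_mem hci hu)

lemma iSup2_induction (p : ℤ → Submodule K L) {c : ℤ} {C : L → Prop} {u : L}
    (hu : u ∈ ⨆ i ≥ c, p i) (hp : ∀ i ≥ c, ∀ v ∈ p i, C v) (h0 : C 0)
    (hadd : ∀ v w, C v → C w → C (v + w)) : C u := by
  refine Submodule.iSup_induction (motive := C) _ hu (fun i v hv => ?_) h0 hadd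
  rcases le_or_gt c i with hc | hc
  · rw [iSup_pos hc] at hv
    exact hp i hc v hv
  · rw [iSup_neg (by omega)] at hv
    simp only [Submodule.mem_bot] at hv
    rw [hv]; exact h0

variable (hdsum : DirectSum.IsInternal g)

/-- projection onto `g j` -/
noncomputable def gproj (j : ℤ) : L →ₗ[K] L :=
  (g j).subtype ∘ₗ
    ((DFinsupp.lapply j : (⨁ i, g i) →ₗ[K] g j) ∘ₗ
      ((LinearEquiv.ofBijective (DirectSum.coeLinearMap g) hdsum).symm : L →ₗ[K] ⨁ i, g i))

lemma gproj_apply (j : ℤ) (u : L) :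
    gproj hdsum j u
      = ((LinearEquiv.ofBijective (DirectSum.coeLinearMap g) hdsum).symm u j : L) := rfl

lemma gproj_mem (j : ℤ) (u : L) : gproj hdsum j u ∈ g j := by
  rw [gproj_apply]; exact Submodule.coe_mem _

lemma gproj_same {j : ℤ} {u : L} (hu : u ∈ g j) : gproj hdsum j u = u := by
  rw [gproj_apply, hdsum.ofBijective_coeLinearMap_of_mem hu]

lemma gproj_ne {i j : ℤ} (hij : i ≠ j) {u : L} (hu : u ∈ g i) : gproj hdsum j u = 0 := by
  rw [gproj_apply, hdsum.ofBijective_coeLinearMap_of_mem_ne hij hu]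
  rfl

include hdsum in
/-- prove a linear-closed property on all of `L` from the graded pieces -/
lemma top_induction {C : L → Prop} (h0 : C 0) (hadd : ∀ v w, C v → C w → C (v + w))
    (hg : ∀ i, ∀ u ∈ g i, C u) : ∀ u, C u := by
  intro u
  have hu : u ∈ ⨆ i, g i := by
    rw [hdsum.submodule_iSup_eq_top]; trivial
  exact Submodule.iSup_induction (motive := C) _ hu (fun i v hv => hg i v hv) h0 hadd

lemma gproj_comm (A : Module.End K L) (c : ℤ) (hA : ∀ i, ∀ u ∈ g i, A u ∈ g (i + c))
    (j : ℤ) (u : L) : gproj hdsum (j + c) (A u) = A (gproj hdsum j u) := by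
  induction u using top_induction hdsum with
  | h0 => simp
  | hadd v w hv hw => simp [map_add, hv, hw]
  | hg i v hv =>
    by_cases hij : i = j
    · subst hij
      rw [gproj_same hdsum hv, gproj_same hdsum (hA i v hv)]
    · rw [gproj_ne hdsum hij hv, gproj_ne hdsum (by omega : i + c ≠ j + c) (hA i v hv), map_zero]

include hdsum in
/-- an operator shifting degrees by `c ≠ 0` is nilpotent -/
lemma shift_nilpotent (hfin : {i : ℤ | g i ≠ ⊥}.Finite) (A : Module.End K L) (c : ℤ)
    (hc : c ≠ 0) (hA : ∀ i, ∀ u ∈ g i, A u ∈ g (i + c)) : ∃ N : ℕ, 0 < N ∧ A ^ N = 0 := by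
  obtain ⟨lo, hlo⟩ := hfin.bddBelow
  obtain ⟨hi, hhi⟩ := hfin.bddAbove
  set N : ℕ := ((hi - lo).toNat + 1) with hN
  refine ⟨N, Nat.succ_pos _, ?_⟩
  have hpow : ∀ (n : ℕ) (i : ℤ), ∀ u ∈ g i, (A ^ n) u ∈ g (i + n * c) := by
    intro n
    induction n with
    | zero => intro i u hu; simpa using hu
    | succ m ihm =>
      intro i u hu
      have h1 := hA (i + m * c) _ (ihm i u hu)
      rw [pow_succ', Module.End.mul_apply]
      have heq : i + (m : ℤ) * c + c = i + ((m : ℕ) + 1 : ℕ) * c := by push_cast; ring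
      rwa [heq] at h1
  have hzero : ∀ i, ∀ u ∈ g i, (A ^ N) u = 0 := by
    intro i u hu
    by_cases hbot : g i = ⊥
    · rw [hbot] at hu
      simp only [Submodule.mem_bot] at hu
      rw [hu, map_zero]
    · have hmem := hpow N i u hu
      have hIi : i ∈ {i : ℤ | g i ≠ ⊥} := hbot
      have h1 : lo ≤ i := hlo hIi
      have h2 : i ≤ hi := hhi hIi
      have hout : g (i + N * c) = ⊥ := by
        by_contra hne
        have h3 : lo ≤ i + N * c := hlo hne
        have h4 : i + N * c ≤ hi := hhi hne
        have hNc : (N : ℤ) ≤ N * c ∨ N * c ≤ -(N : ℤ) := by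
          rcases lt_or_gt_of_ne hc with hneg | hpos
          · right
            have : (N : ℤ) * c ≤ N * (-1) := by
              apply mul_le_mul_of_nonneg_left _ (by positivity)
              omega
            omega
          · left
            have : (N : ℤ) * 1 ≤ N * c := by
              apply mul_le_mul_of_nonneg_left _ (by positivity)
              omega
            omega
        have hNbig : (N : ℤ) = ((hi - lo).toNat : ℤ) + 1 := by rw [hN]; push_cast; ring
        have htn : hi - lo ≤ ((hi - lo).toNat : ℤ) := Int.self_le_toNat _
        omega
      rw [hout] at hmem
      simp only [Submodule.mem_bot] at hmem
      exact hmem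
  ext u
  simp only [LinearMap.zero_apply]
  induction u using top_induction hdsum with
  | h0 => simp
  | hadd v w hv hw => simp [map_add, hv, hw]
  | hg i v hv => exact hzero i v hv

end GradeChunk

namespace KillChunk

open GradeChunk

variable {K L : Type*} [Field K] [CharZero K] [LieRing L] [LieAlgebra K L]
  [FiniteDimensional K L]
variable {g : ℤ → Submodule K L}
variable (hdsum : DirectSum.IsInternal g) (hfin : {i : ℤ | g i ≠ ⊥}.Finite)
variable (hbr : ∀ i j : ℤ, ∀ u ∈ g i, ∀ v ∈ g j, ⁅u, v⁆ ∈ g (i + j))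

include hdsum hfin hbr in
lemma killing_graded {i j : ℤ} (hij : i + j ≠ 0) {u v : L} (hu : u ∈ g i) (hv : v ∈ g j) :
    killingForm K L u v = 0 := by
  rw [killingForm_apply_apply]
  set A : Module.End K L := ((LieAlgebra.ad K L u) ∘ₗ (LieAlgebra.ad K L v) : L →ₗ[K] L) with hA
  have hmaps : ∀ k, ∀ w ∈ g k, A w ∈ g (k + (i + j)) := by
    intro k w hw
    have h1 : ⁅v, w⁆ ∈ g (j + k) := hbr j k v hv w hw
    have h2 : ⁅u, ⁅v, w⁆⁆ ∈ g (i + (j + k)) := hbr _ _ u hu _ h1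
    have heq : i + (j + k) = k + (i + j) := by ring
    rw [heq] at h2
    simpa [hA, LieAlgebra.ad_apply] using h2
  obtain ⟨N, _, hNA⟩ := shift_nilpotent hdsum hfin A (i + j) hij hmaps
  exact (LinearMap.isNilpotent_trace_of_isNilpotent ⟨N, hNA⟩).eq_zero

include hdsum hfin hbr in
lemma gproj_adjoint (j : ℤ) (u v : L) :
    killingForm K L (gproj hdsum j u) v = killingForm K L u (gproj hdsum (-j) v) := by
  induction u using top_induction hdsum with
  | h0 => simp
  | hadd a b ha hb => simp only [map_add, LinearMap.add_apply, ha, hb]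
  | hg a ua hua =>
    induction v using top_induction hdsum with
    | h0 => simp
    | hadd a' b' ha' hb' => simp only [map_add, ha', hb']
    | hg b vb hvb =>
      by_cases haj : a = j
      · subst haj
        rw [gproj_same hdsum hua]
        by_cases hbj : b = -a
        · subst hbj
          rw [gproj_same hdsum hvb]
        · rw [gproj_ne hdsum (show b ≠ -a by exact hbj) hvb, map_zero,
            killing_graded hdsum hfin hbr (show a + b ≠ 0 by omega) hua hvb]
      · rw [gproj_ne hdsum haj hua, LinearMap.map_zero₂]
        by_cases hbj : b = -j
        · subst hbj
          rw [gproj_same hdsum hvb,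
            killing_graded hdsum hfin hbr (show a + -j ≠ 0 by omega) hua hvb]
        · rw [gproj_ne hdsum hbj hvb, map_zero]

end KillChunk


namespace SChunk

open GradeChunk KillChunk

variable {K L : Type*} [Field K] [CharZero K] [LieRing L] [LieAlgebra K L]
  [FiniteDimensional K L]
variable {g : ℤ → Submodule K L} {x h y : L}

lemma sFun_neg_one : sFun g x (-1) = Submodule.span K {x} := by
  rw [sFun, if_neg (by omega)]
  have h0 : ((-1 : ℤ) + 1).toNat = 0 := by norm_num
  rw [h0]
  simp [sAux]

lemma sFun_of_lt {i : ℤ} (hi : i < -1) : sFun g x i = ⊥ := if_pos hi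

lemma sFun_nonneg {i : ℤ} (hi : 0 ≤ i) :
    sFun g x i = g i ⊓ (sFun g x (i - 1)).comap (LieAlgebra.ad K L x) := by
  rw [sFun, sFun, if_neg (by omega), if_neg (by omega)]
  have h3 : (i + 1).toNat = (i - 1 + 1).toNat + 1 := by omega
  rw [h3, sAux]
  have h4 : (((i - 1 + 1).toNat : ℕ) : ℤ) = i := by omega
  rw [h4]

lemma mem_sFun_iff {i : ℤ} (hi : 0 ≤ i) {u : L} :
    u ∈ sFun g x i ↔ u ∈ g i ∧ ⁅x, u⁆ ∈ sFun g x (i - 1) := by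
  rw [sFun_nonneg hi, Submodule.mem_inf, Submodule.mem_comap, LieAlgebra.ad_apply]

lemma sFun_le_g (hx : x ∈ g (-1)) (i : ℤ) : sFun g x i ≤ g i := by
  rcases lt_trichotomy i (-1) with hi | hi | hi
  · rw [sFun_of_lt hi]; exact bot_le
  · subst hi
    rw [sFun_neg_one]
    exact Submodule.span_le.mpr (by simpa using hx)
  · rw [sFun_nonneg (by omega)]
    exact inf_le_left

lemma lie_x_sFun {i : ℤ} (hi : 0 ≤ i) {u : L} (hu : u ∈ sFun g x i) :
    ⁅x, u⁆ ∈ sFun g x (i - 1) :=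
  ((mem_sFun_iff hi).mp hu).2

lemma mem_sm1 {u : L} (hu : u ∈ sFun g x (-1)) : ∃ a : K, ⁅x, u⁆ = 0 ∧ u = a • x := by
  rw [sFun_neg_one] at hu
  obtain ⟨a, ha⟩ := Submodule.mem_span_singleton.mp hu
  exact ⟨a, by rw [← ha, lie_smul, lie_self, smul_zero], ha.symm⟩

lemma mem_s0_x {u : L} (hu : u ∈ sFun g x 0) : ∃ a : K, ⁅x, u⁆ = a • x := by
  have h1 := lie_x_sFun le_rfl hu
  rw [show (0 : ℤ) - 1 = -1 by omega, sFun_neg_one] at h1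
  obtain ⟨a, ha⟩ := Submodule.mem_span_singleton.mp h1
  exact ⟨a, ha.symm⟩

variable (hh : h ∈ g 0) (hhx : ⁅h, x⁆ = (-2 : K) • x)

include hh hhx in
lemma h_mem_s0 : h ∈ sFun g x 0 := by
  rw [mem_sFun_iff le_rfl]
  refine ⟨hh, ?_⟩
  have hxh : ⁅x, h⁆ = (2 : K) • x := by
    rw [← lie_skew, hhx]; module
  rw [hxh, show (0 : ℤ) - 1 = -1 by omega, sFun_neg_one]
  exact Submodule.smul_mem _ _ (Submodule.mem_span_singleton_self x)

variable (hbr : ∀ i j : ℤ, ∀ u ∈ g i, ∀ v ∈ g j, ⁅u, v⁆ ∈ g (i + j))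

include hbr in
lemma s0_bracket {u v : L} (hu : u ∈ sFun g x 0) (hv : v ∈ sFun g x 0) :
    ⁅u, v⁆ ∈ sFun g x 0 := by
  obtain ⟨a, hxu⟩ := mem_s0_x hu
  obtain ⟨b, hxv⟩ := mem_s0_x hv
  rw [mem_sFun_iff le_rfl] at hu hv ⊢
  refine ⟨by simpa using hbr 0 0 u hu.1 v hv.1, ?_⟩
  have hux : ⁅u, x⁆ = -(a • x) := by
    have h5 := lie_skew x u
    rw [hxu] at h5
    exact neg_eq_iff_eq_neg.mp h5
  have e1 : ⁅x, ⁅u, v⁆⁆ = 0 := by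
    rw [leibniz_lie, hxu, smul_lie, hxv, lie_smul, hux]
    module
  rw [e1, show (0 : ℤ) - 1 = -1 by omega, sFun_neg_one]
  exact Submodule.zero_mem _

variable (hx : x ∈ g (-1)) (hy : y ∈ g 1) (hyx : ⁅y, x⁆ = h)

include hh hhx hy hyx in
lemma y_mem_s1 : y ∈ sFun g x 1 := by
  rw [mem_sFun_iff (by omega)]
  refine ⟨hy, ?_⟩
  have hxy : ⁅x, y⁆ = -h := by
    rw [← lie_skew, hyx]
  rw [hxy, show (1 : ℤ) - 1 = 0 by omega]
  exact Submodule.neg_mem _ (h_mem_s0 hh hhx)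

include hh hhx hbr hyx hy in
lemma E_s0_mem_s1 {u : L} (hu : u ∈ sFun g x 0) : ⁅y, u⁆ ∈ sFun g x 1 := by
  obtain ⟨a, hxu⟩ := mem_s0_x hu
  rw [mem_sFun_iff (by omega), show (1 : ℤ) - 1 = 0 by omega]
  constructor
  · simpa using hbr 1 0 y hy u ((mem_sFun_iff le_rfl).mp hu).1
  · have hxy : ⁅x, y⁆ = -h := by rw [← lie_skew, hyx]
    have e1 : ⁅x, ⁅y, u⁆⁆ = -⁅h, u⁆ + a • h := by
      rw [leibniz_lie, hxy, hxu, lie_smul, hyx, neg_lie]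
    rw [e1]
    refine Submodule.add_mem _ (Submodule.neg_mem _ ?_) (Submodule.smul_mem _ _ ?_)
    · exact s0_bracket hbr (h_mem_s0 hh hhx) hu
    · exact h_mem_s0 hh hhx

variable (hdsum : DirectSum.IsInternal g) (hfin : {i : ℤ | g i ≠ ⊥}.Finite)
variable (hnd : ∀ u ∈ ⨆ i ≥ (-1 : ℤ), sFun g x i,
      (∀ v ∈ ⨆ i ≥ (-1 : ℤ), sFun g x i, killingForm K L u v = 0) → u = 0)

include hdsum hfin hbr hx hnd in
lemma s_vanish_of_perp_x {i : ℤ} (hi : 1 ≤ i) {s : L} (hs : s ∈ sFun g x i)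
    (hsx : killingForm K L s x = 0) : s = 0 := by
  refine hnd s (mem_iSup2 (by omega) hs) ?_
  intro v hv
  refine iSup2_induction (C := fun t => killingForm K L s t = 0) _ hv
    (fun j hj t ht => ?_) (by simp) (fun a b ha hb => by
      show killingForm K L s (a + b) = 0
      have ha' : killingForm K L s a = 0 := ha
      have hb' : killingForm K L s b = 0 := hb
      rw [map_add, ha', hb', add_zero])
  rcases eq_or_lt_of_le hj with hj1 | hj1
  · obtain ⟨c, -, hc⟩ := mem_sm1 (x := x) (by rw [← hj1] at ht; exact ht)
    rw [hc, map_smul, smul_eq_mul, hsx, mul_zero]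
  · exact killing_graded hdsum hfin hbr (by omega)
      (sFun_le_g hx i hs) (sFun_le_g hx j ht)

include hdsum hfin hbr hx hnd in
lemma sFun_bot_of_two_le {i : ℤ} (hi : 2 ≤ i) : sFun g x i = ⊥ := by
  rw [Submodule.eq_bot_iff]
  intro s hs
  refine s_vanish_of_perp_x hbr hx hdsum hfin hnd (by omega) hs ?_
  exact killing_graded hdsum hfin hbr (by omega) (sFun_le_g hx i hs) hx

include hdsum hfin hbr hx hy hh hhx hyx hnd in
lemma sFun_one_eq : sFun g x 1 = Submodule.span K {y} := by
  apply le_antisymm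
  · intro s hs
    rw [Submodule.mem_span_singleton]
    by_cases hbeta : killingForm K L y x = 0
    · have hy0 : y = 0 :=
        s_vanish_of_perp_x hbr hx hdsum hfin hnd le_rfl (y_mem_s1 hh hhx hy hyx) hbeta
      have hh0 : h = 0 := by rw [← hyx, hy0, zero_lie]
      have hx0 : x = 0 := by
        have h2 : (-2 : K) • x = 0 := by rw [← hhx, hh0, zero_lie]
        have := smul_eq_zero.mp h2
        simpa using this
      have hs0 : s = 0 := by
        refine s_vanish_of_perp_x hbr hx hdsum hfin hnd le_rfl hs ?_
        rw [hx0, map_zero]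
      exact ⟨0, by rw [hs0, zero_smul]⟩
    · set c : K := killingForm K L s x / killingForm K L y x with hc
      have hts : s - c • y = 0 := by
        refine s_vanish_of_perp_x hbr hx hdsum hfin hnd le_rfl
          (Submodule.sub_mem _ hs (Submodule.smul_mem _ _ (y_mem_s1 hh hhx hy hyx))) ?_
        rw [map_sub, map_smul, LinearMap.sub_apply, LinearMap.smul_apply, smul_eq_mul, hc,
          div_mul_cancel₀ _ hbeta, sub_self]
      exact ⟨c, (sub_eq_zero.mp hts).symm⟩
  · rw [Submodule.span_le]
    intro t ht
    simp only [Set.mem_singleton_iff] at ht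
    rw [ht]
    exact y_mem_s1 hh hhx hy hyx


include hdsum hfin hbr hx hy hh hhx hyx hnd in
lemma S_rep {s : L} (hs : s ∈ ⨆ i ≥ (-1 : ℤ), sFun g x i) :
    ∃ (a b : K) (s₀ : L), s₀ ∈ sFun g x 0 ∧ s = a • x + s₀ + b • y := by
  refine iSup2_induction (C := fun s => ∃ (a b : K) (s₀ : L),
    s₀ ∈ sFun g x 0 ∧ s = a • x + s₀ + b • y) _ hs (fun j hj t ht => ?_)
    ⟨0, 0, 0, Submodule.zero_mem _, by simp⟩ ?_
  · rcases lt_trichotomy j 0 with hj0 | hj0 | hj0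
    · have hje : j = -1 := by omega
      rw [hje] at ht
      obtain ⟨a, -, ha⟩ := mem_sm1 ht
      exact ⟨a, 0, 0, Submodule.zero_mem _, by rw [ha]; simp⟩
    · rw [hj0] at ht
      exact ⟨0, 0, t, ht, by simp⟩
    · by_cases hj1 : j = 1
      · rw [hj1] at ht
        rw [sFun_one_eq hh hhx hbr hx hy hyx hdsum hfin hnd] at ht
        obtain ⟨b, hb⟩ := Submodule.mem_span_singleton.mp ht
        exact ⟨0, b, 0, Submodule.zero_mem _, by rw [← hb]; simp⟩
      · rw [sFun_bot_of_two_le hbr hx hdsum hfin hnd (by omega)] at ht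
        simp only [Submodule.mem_bot] at ht
        exact ⟨0, 0, 0, Submodule.zero_mem _, by rw [ht]; simp⟩
  · rintro v w ⟨a, b, s₀, hs₀, rfl⟩ ⟨a', b', s₀', hs₀', rfl⟩
    exact ⟨a + a', b + b', s₀ + s₀', Submodule.add_mem _ hs₀ hs₀', by module⟩

include hdsum hfin hbr hx hy hh hhx hyx hnd in
lemma S0_rep {s : L} (hs : s ∈ ⨆ i ≥ (0 : ℤ), sFun g x i) :
    ∃ (b : K) (s₀ : L), s₀ ∈ sFun g x 0 ∧ s = s₀ + b • y := by
  refine iSup2_induction (C := fun s => ∃ (b : K) (s₀ : L),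
    s₀ ∈ sFun g x 0 ∧ s = s₀ + b • y) _ hs (fun j hj t ht => ?_)
    ⟨0, 0, Submodule.zero_mem _, by simp⟩ ?_
  · rcases eq_or_lt_of_le hj with hj0 | hj0
    · rw [← hj0] at ht
      exact ⟨0, t, ht, by simp⟩
    · by_cases hj1 : j = 1
      · rw [hj1] at ht
        rw [sFun_one_eq hh hhx hbr hx hy hyx hdsum hfin hnd] at ht
        obtain ⟨b, hb⟩ := Submodule.mem_span_singleton.mp ht
        exact ⟨b, 0, Submodule.zero_mem _, by rw [← hb]; simp⟩
      · rw [sFun_bot_of_two_le hbr hx hdsum hfin hnd (by omega)] at ht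
        simp only [Submodule.mem_bot] at ht
        exact ⟨0, 0, Submodule.zero_mem _, by rw [ht]; simp⟩
  · rintro v w ⟨b, s₀, hs₀, rfl⟩ ⟨b', s₀', hs₀', rfl⟩
    exact ⟨b + b', s₀ + s₀', Submodule.add_mem _ hs₀ hs₀', by module⟩

lemma lie_x_S {s : L} (hs : s ∈ ⨆ i ≥ (-1 : ℤ), sFun g x i) :
    ⁅x, s⁆ ∈ ⨆ i ≥ (-1 : ℤ), sFun g x i := by
  refine iSup2_induction (C := fun s => ⁅x, s⁆ ∈ ⨆ i ≥ (-1 : ℤ), sFun g x i) _ hs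
    (fun j hj t ht => ?_) (by simp)
    (fun v w hv hw => by
      show ⁅_, v + w⁆ ∈ _
      rw [lie_add]
      exact Submodule.add_mem _ hv hw)
  rcases eq_or_lt_of_le hj with hj0 | hj0
  · obtain ⟨a, ha0, -⟩ := mem_sm1 (by rw [← hj0] at ht; exact ht)
    rw [ha0]
    exact Submodule.zero_mem _
  · exact mem_iSup2 (by omega) (lie_x_sFun (by omega) ht)

include hh hhx hbr hy hyx hdsum hfin hx hnd in
lemma lie_y_S {s : L} (hs : s ∈ ⨆ i ≥ (-1 : ℤ), sFun g x i) :
    ⁅y, s⁆ ∈ ⨆ i ≥ (-1 : ℤ), sFun g x i := by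
  refine iSup2_induction (C := fun s => ⁅y, s⁆ ∈ ⨆ i ≥ (-1 : ℤ), sFun g x i) _ hs
    (fun j hj t ht => ?_) (by simp)
    (fun v w hv hw => by
      show ⁅_, v + w⁆ ∈ _
      rw [lie_add]
      exact Submodule.add_mem _ hv hw)
  rcases lt_trichotomy j 0 with hj0 | hj0 | hj0
  · have hje : j = -1 := by omega
    rw [hje] at ht
    obtain ⟨a, -, ha⟩ := mem_sm1 ht
    rw [ha, lie_smul, hyx]
    exact mem_iSup2 (by omega) (Submodule.smul_mem _ _ (h_mem_s0 hh hhx))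
  · rw [hj0] at ht
    exact mem_iSup2 (by omega) (E_s0_mem_s1 hh hhx hbr hy hyx ht)
  · by_cases hj1 : j = 1
    · rw [hj1, sFun_one_eq hh hhx hbr hx hy hyx hdsum hfin hnd] at ht
      obtain ⟨b, hb⟩ := Submodule.mem_span_singleton.mp ht
      rw [← hb, lie_smul, lie_self, smul_zero]
      exact Submodule.zero_mem _
    · rw [sFun_bot_of_two_le hbr hx hdsum hfin hnd (by omega)] at ht
      simp only [Submodule.mem_bot] at ht
      rw [ht, lie_zero]
      exact Submodule.zero_mem _

include hh hhx hbr hy hyx hdsum hfin hx hnd in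
lemma lie_s0_S {u s : L} (hu : u ∈ sFun g x 0) (hs : s ∈ ⨆ i ≥ (-1 : ℤ), sFun g x i) :
    ⁅u, s⁆ ∈ ⨆ i ≥ (-1 : ℤ), sFun g x i := by
  refine iSup2_induction (C := fun s => ⁅u, s⁆ ∈ ⨆ i ≥ (-1 : ℤ), sFun g x i) _ hs
    (fun j hj t ht => ?_) (by simp)
    (fun v w hv hw => by
      show ⁅_, v + w⁆ ∈ _
      rw [lie_add]
      exact Submodule.add_mem _ hv hw)
  rcases lt_trichotomy j 0 with hj0 | hj0 | hj0
  · have hje : j = -1 := by omega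
    rw [hje] at ht
    obtain ⟨a, -, ha⟩ := mem_sm1 ht
    obtain ⟨c, hc⟩ := mem_s0_x hu
    have e1 : ⁅u, t⁆ = -((a * c) • x) := by
      rw [ha, lie_smul, ← lie_skew, hc]
      module
    rw [e1]
    refine Submodule.neg_mem _ (mem_iSup2 (by omega : (-1 : ℤ) ≤ -1) ?_)
    rw [sFun_neg_one]
    exact Submodule.smul_mem _ _ (Submodule.mem_span_singleton_self x)
  · rw [hj0] at ht
    exact mem_iSup2 (by omega) (s0_bracket hbr hu ht)
  · by_cases hj1 : j = 1
    · rw [hj1, sFun_one_eq hh hhx hbr hx hy hyx hdsum hfin hnd] at ht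
      obtain ⟨b, hb⟩ := Submodule.mem_span_singleton.mp ht
      have e1 : ⁅u, t⁆ = -(b • ⁅y, u⁆) := by
        rw [← hb, lie_smul, ← lie_skew]
        module
      rw [e1]
      exact Submodule.neg_mem _ (Submodule.smul_mem _ _
        (mem_iSup2 (by omega) (E_s0_mem_s1 hh hhx hbr hy hyx hu)))
    · rw [sFun_bot_of_two_le hbr hx hdsum hfin hnd (by omega)] at ht
      simp only [Submodule.mem_bot] at ht
      rw [ht, lie_zero]
      exact Submodule.zero_mem _

include hh hhx hbr hy hyx hdsum hfin hx hnd in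
lemma lie_S0_S {u s : L} (hu : u ∈ ⨆ i ≥ (0 : ℤ), sFun g x i)
    (hs : s ∈ ⨆ i ≥ (-1 : ℤ), sFun g x i) :
    ⁅u, s⁆ ∈ ⨆ i ≥ (-1 : ℤ), sFun g x i := by
  obtain ⟨b, s₀, hs₀, rfl⟩ := S0_rep hh hhx hbr hx hy hyx hdsum hfin hnd hu
  rw [add_lie, smul_lie]
  exact Submodule.add_mem _ (lie_s0_S hh hhx hbr hx hy hyx hdsum hfin hnd hs₀ hs)
    (Submodule.smul_mem _ _ (lie_y_S hh hhx hbr hx hy hyx hdsum hfin hnd hs))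

lemma mem_perpOf {S' : Submodule K L} {u : L} :
    u ∈ perpOf (killingForm K L) S' ↔ ∀ s ∈ S', killingForm K L u s = 0 := Iff.rfl

lemma perp_lie {z m : L}
    (hz : ∀ s ∈ ⨆ i ≥ (-1 : ℤ), sFun g x i, ⁅z, s⁆ ∈ ⨆ i ≥ (-1 : ℤ), sFun g x i)
    (hm : m ∈ perpOf (killingForm K L) (⨆ i ≥ (-1 : ℤ), sFun g x i)) :
    ⁅z, m⁆ ∈ perpOf (killingForm K L) (⨆ i ≥ (-1 : ℤ), sFun g x i) := by
  intro s hs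
  have e1 : ⁅z, m⁆ = -⁅m, z⁆ := by rw [lie_skew]
  rw [e1, map_neg, LinearMap.neg_apply, neg_eq_zero,
    LieModule.traceForm_apply_lie_apply]
  exact hm _ (hz s hs)

include hdsum in
lemma gproj_S (l : ℤ) {s : L} (hs : s ∈ ⨆ i ≥ (-1 : ℤ), sFun g x i) (hx : x ∈ g (-1)) :
    gproj hdsum l s ∈ ⨆ i ≥ (-1 : ℤ), sFun g x i := by
  refine iSup2_induction (C := fun s => gproj hdsum l s ∈ ⨆ i ≥ (-1 : ℤ), sFun g x i) _ hs
    (fun j hj t ht => ?_) (by simp)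
    (fun v w hv hw => by
      show gproj hdsum l (v + w) ∈ _
      rw [map_add]
      exact Submodule.add_mem _ hv hw)
  show gproj hdsum l t ∈ ⨆ i ≥ (-1 : ℤ), sFun g x i
  by_cases hjl : j = l
  · subst hjl
    rw [gproj_same hdsum (sFun_le_g hx j ht)]
    exact mem_iSup2 hj ht
  · rw [gproj_ne hdsum hjl (sFun_le_g hx j ht)]
    exact Submodule.zero_mem _

include hdsum hfin hbr hx in
lemma gproj_perp (l : ℤ) {m : L}
    (hm : m ∈ perpOf (killingForm K L) (⨆ i ≥ (-1 : ℤ), sFun g x i)) :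
    gproj hdsum l m ∈ perpOf (killingForm K L) (⨆ i ≥ (-1 : ℤ), sFun g x i) := by
  intro s hs
  rw [gproj_adjoint hdsum hfin hbr]
  exact hm _ (gproj_S hdsum (-l) hs hx)


end SChunk


namespace DimChunk

open FiniteDimensional

variable {K L : Type*} [Field K] [AddCommGroup L] [Module K L] [FiniteDimensional K L]

lemma ker_sup_range_eq_top (E F : Module.End K L)
    (h1 : ∀ v, E v = 0 → v ∈ LinearMap.range F → v = 0)
    (h2 : ∀ v, F v = 0 → v ∈ LinearMap.range E → v = 0) :
    LinearMap.ker E ⊔ LinearMap.range F = ⊤ := by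
  have hb1 : LinearMap.ker E ⊓ LinearMap.range F = ⊥ := by
    rw [Submodule.eq_bot_iff]
    rintro v hv
    obtain ⟨hv1, hv2⟩ := Submodule.mem_inf.mp hv
    exact h1 v (LinearMap.mem_ker.mp hv1) hv2
  have hb2 : LinearMap.ker F ⊓ LinearMap.range E = ⊥ := by
    rw [Submodule.eq_bot_iff]
    rintro v hv
    obtain ⟨hv1, hv2⟩ := Submodule.mem_inf.mp hv
    exact h2 v (LinearMap.mem_ker.mp hv1) hv2
  have e1 := Submodule.finrank_sup_add_finrank_inf_eq (LinearMap.ker E) (LinearMap.range F)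
  have e2 := Submodule.finrank_sup_add_finrank_inf_eq (LinearMap.ker F) (LinearMap.range E)
  rw [hb1, finrank_bot, add_zero] at e1
  rw [hb2, finrank_bot, add_zero] at e2
  have r1 := LinearMap.finrank_range_add_finrank_ker E
  have r2 := LinearMap.finrank_range_add_finrank_ker F
  have le1 : Module.finrank K ↥(LinearMap.ker E ⊔ LinearMap.range F) ≤ Module.finrank K L :=
    Submodule.finrank_le _
  have le2 : Module.finrank K ↥(LinearMap.ker F ⊔ LinearMap.range E) ≤ Module.finrank K L :=
    Submodule.finrank_le _
  apply Submodule.eq_top_of_finrank_eq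
  omega

lemma compl_sup_perp (B : LinearMap.BilinForm K L) (S : Submodule K L)
    (hdisj : ∀ u ∈ S, (∀ v ∈ S, B u v = 0) → u = 0) :
    S ⊔ perpOf B S = ⊤ := by
  set Φ : L →ₗ[K] Module.Dual K S := S.subtype.dualMap.comp B with hPhi
  have hker : LinearMap.ker Φ = perpOf B S := by
    ext u
    simp only [LinearMap.mem_ker, hPhi, LinearMap.comp_apply]
    constructor
    · intro h0 t ht
      have := congrArg (fun φ => φ ⟨t, ht⟩) h0
      simpa using this
    · intro h0
      ext t
      simpa using h0 t.1 t.2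
  have hinf : S ⊓ perpOf B S = ⊥ := by
    rw [Submodule.eq_bot_iff]
    rintro v hv
    obtain ⟨hv1, hv2⟩ := Submodule.mem_inf.mp hv
    exact hdisj v hv1 (fun t ht => hv2 t ht)
  have e1 := Submodule.finrank_sup_add_finrank_inf_eq S (perpOf B S)
  rw [hinf, finrank_bot, add_zero] at e1
  have r1 := LinearMap.finrank_range_add_finrank_ker Φ
  rw [hker] at r1
  have hd : Module.finrank K (Module.Dual K S) = Module.finrank K S :=
    Subspace.dual_finrank_eq
  have le0 : Module.finrank K ↥(LinearMap.range Φ) ≤ Module.finrank K (Module.Dual K S) :=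
    Submodule.finrank_le _
  have le1 : Module.finrank K ↥(S ⊔ perpOf B S) ≤ Module.finrank K L :=
    Submodule.finrank_le _
  apply Submodule.eq_top_of_finrank_eq
  omega

end DimChunk

theorem stmt2 {K L : Type*} [Field K] [CharZero K] [LieRing L] [LieAlgebra K L]
    [FiniteDimensional K L] [LieAlgebra.IsSemisimple K L]
    (g : ℤ → Submodule K L)
    (hdsum : DirectSum.IsInternal g)
    (hfin : {i : ℤ | g i ≠ ⊥}.Finite)
    (hbr : ∀ i j : ℤ, ∀ u ∈ g i, ∀ v ∈ g j, ⁅u, v⁆ ∈ g (i + j))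
    -- the graded `sl₂`-triple `(x, h, y)`:
    (x h y : L) (hx : x ∈ g (-1)) (hh : h ∈ g 0) (hy : y ∈ g 1)
    (hhx : ⁅h, x⁆ = (-2 : K) • x) (hhy : ⁅h, y⁆ = (2 : K) • y) (hyx : ⁅y, x⁆ = h)
    -- the restriction of the Killing form to `𝔰 = Σ_{i ≥ -1} 𝔰_i` is nondegenerate:
    (hnd : ∀ u ∈ ⨆ i ≥ (-1 : ℤ), sFun g x i,
      (∀ v ∈ ⨆ i ≥ (-1 : ℤ), sFun g x i, killingForm K L u v = 0) → u = 0) :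
    -- `𝔭` is the internal direct sum of `W` and `𝔰⁽⁰⁾ + ⁅x, 𝔤₊⁆`, and `W` is
    -- `𝔰⁽⁰⁾`-invariant, where `W := {u ∈ 𝔰^⊥ ∩ 𝔭 : ⁅u, y⁆ = 0}`.
    (perpOf (killingForm K L) (⨆ i ≥ (-1 : ℤ), sFun g x i) ⊓ (⨆ i ≥ (0 : ℤ), g i) ⊓ kerRight y)
        ⊓ ((⨆ i ≥ (0 : ℤ), sFun g x i) ⊔
            Submodule.map (LieAlgebra.ad K L x) (⨆ i ≥ (1 : ℤ), g i)) = ⊥ ∧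
    (perpOf (killingForm K L) (⨆ i ≥ (-1 : ℤ), sFun g x i) ⊓ (⨆ i ≥ (0 : ℤ), g i) ⊓ kerRight y)
        ⊔ ((⨆ i ≥ (0 : ℤ), sFun g x i) ⊔
            Submodule.map (LieAlgebra.ad K L x) (⨆ i ≥ (1 : ℤ), g i)) =
      (⨆ i ≥ (0 : ℤ), g i) ∧
    (∀ u ∈ ⨆ i ≥ (0 : ℤ), sFun g x i,
      ∀ w ∈ perpOf (killingForm K L) (⨆ i ≥ (-1 : ℤ), sFun g x i) ⊓ (⨆ i ≥ (0 : ℤ), g i)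
          ⊓ kerRight y,
      ⁅u, w⁆ ∈ perpOf (killingForm K L) (⨆ i ≥ (-1 : ℤ), sFun g x i) ⊓ (⨆ i ≥ (0 : ℤ), g i)
          ⊓ kerRight y) := by
    classical
  open GradeChunk SChunk KillChunk DimChunk Sl2Chunk in
  set E : Module.End K L := LieAlgebra.ad K L y with hE
  set F : Module.End K L := LieAlgebra.ad K L x with hF
  set HH : Module.End K L := LieAlgebra.ad K L h with hHH
  -- commutation relations
  letI : LieRing (Module.End K L) := LieRing.ofAssociativeRing
  have hEF : E * F - F * E = HH := by
    have h1 := (LieAlgebra.ad K L).map_lie y x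
    rw [hyx] at h1
    rw [hHH, h1, Ring.lie_def]
  have hHE : HH * E - E * HH = (2 : K) • E := by
    have h1 := (LieAlgebra.ad K L).map_lie h y
    rw [hhy, map_smul] at h1
    rw [← Ring.lie_def, ← h1, hE]
  have hHF : HH * F - F * HH = (-2 : K) • F := by
    have h1 := (LieAlgebra.ad K L).map_lie h x
    rw [hhx, map_smul] at h1
    rw [← Ring.lie_def, ← h1, hF]
  -- degree shifts
  have hFmaps : ∀ i, ∀ u ∈ g i, F u ∈ g (i + (-1)) := by
    intro i u hu
    have h1 := hbr (-1) i x hx u hu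
    rw [show (-1) + i = i + (-1) by ring] at h1
    simpa [hF, LieAlgebra.ad_apply] using h1
  have hEmaps : ∀ i, ∀ u ∈ g i, E u ∈ g (i + 1) := by
    intro i u hu
    have h1 := hbr 1 i y hy u hu
    rw [show 1 + i = i + 1 by ring] at h1
    simpa [hE, LieAlgebra.ad_apply] using h1
  obtain ⟨NF, -, hNF⟩ := GradeChunk.shift_nilpotent hdsum hfin F (-1) (by omega) hFmaps
  obtain ⟨NE, -, hNE⟩ := GradeChunk.shift_nilpotent hdsum hfin E 1 (by omega) hEmaps
  have hkerEF : ∀ v, E v = 0 → v ∈ LinearMap.range F → v = 0 :=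
    Sl2Chunk.ker_range_f hEF hHE hHF NF hNF
  have hkerFE : ∀ v, F v = 0 → v ∈ LinearMap.range E → v = 0 :=
    Sl2Chunk.ker_range_e hEF hHE hHF NE hNE
  have htop1 : LinearMap.ker E ⊔ LinearMap.range F = ⊤ :=
    DimChunk.ker_sup_range_eq_top E F hkerEF hkerFE
  have htop2 : (⨆ i ≥ (-1 : ℤ), sFun g x i)
      ⊔ perpOf (killingForm K L) (⨆ i ≥ (-1 : ℤ), sFun g x i) = ⊤ :=
    DimChunk.compl_sup_perp _ _ hnd
  have hinfSP : ∀ v, v ∈ (⨆ i ≥ (-1 : ℤ), sFun g x i) →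
      v ∈ perpOf (killingForm K L) (⨆ i ≥ (-1 : ℤ), sFun g x i) → v = 0 :=
    fun v h1 h2 => hnd v h1 h2
  have hxy : ⁅x, y⁆ = -h := by rw [← lie_skew, hyx]
  have hyh : ⁅y, h⁆ = -((2 : K) • y) := by rw [← lie_skew, hhy]
  -- bracket of degree-≥0 homogeneous elements with 𝔭
  have hlieP : ∀ i ≥ (0 : ℤ), ∀ t ∈ g i, ∀ w ∈ (⨆ i ≥ (0 : ℤ), g i),
      ⁅t, w⁆ ∈ (⨆ i ≥ (0 : ℤ), g i) := by
    intro i hi t ht w hw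
    refine GradeChunk.iSup2_induction (C := fun w => ⁅t, w⁆ ∈ (⨆ i ≥ (0 : ℤ), g i)) _ hw
      (fun j hj v hv => ?_) (by simp) ?_
    · exact GradeChunk.mem_iSup2 (by omega) (hbr i j t ht v hv)
    · intro a b ha hb
      show ⁅t, a + b⁆ ∈ _
      rw [lie_add]
      exact Submodule.add_mem _ ha hb
  refine ⟨?_, ?_, ?_⟩
  · -- GOAL 1 : trivial intersection
    rw [Submodule.eq_bot_iff]
    intro v hv
    obtain ⟨hv1, hvsum⟩ := Submodule.mem_inf.mp hv
    obtain ⟨hv2, hvker⟩ := Submodule.mem_inf.mp hv1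
    obtain ⟨hvperp, hvP⟩ := Submodule.mem_inf.mp hv2
    have hvkery : ⁅v, y⁆ = 0 := hvker
    obtain ⟨s, hsS0, w', hw', hvsw⟩ := Submodule.mem_sup.mp hvsum
    obtain ⟨z, hz, hFz⟩ := Submodule.mem_map.mp hw'
    obtain ⟨b, s₀, hs₀, hsrep⟩ := SChunk.S0_rep hh hhx hbr hx hy hyx hdsum hfin hnd hsS0
    obtain ⟨c, hc⟩ : ∃ c : K, ⁅y, s₀⁆ = c • y := by
      have h1 := SChunk.E_s0_mem_s1 hh hhx hbr hy hyx hs₀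
      rw [SChunk.sFun_one_eq hh hhx hbr hx hy hyx hdsum hfin hnd] at h1
      obtain ⟨c, hcc⟩ := Submodule.mem_span_singleton.mp h1
      exact ⟨c, hcc.symm⟩
    have hw'lie : w' = ⁅x, z⁆ := by rw [← hFz, hF, LieAlgebra.ad_apply]
    set k₀ : L := s₀ + (c / 2) • h with hk₀
    have hk₀S : k₀ ∈ sFun g x 0 :=
      Submodule.add_mem _ hs₀ (Submodule.smul_mem _ _ (SChunk.h_mem_s0 hh hhx))
    have hEk₀ : ⁅y, k₀⁆ = 0 := by
      rw [hk₀, lie_add, hc, lie_smul, hyh]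
      match_scalars
      ring
    have hveq : ⁅x, z + (c / 2) • y⁆ = v - k₀ - b • y := by
      rw [lie_add, lie_smul, hxy, hk₀, ← hvsw, hsrep, hw'lie]
      module
    have hEv0 : ⁅y, v⁆ = 0 := by
      have h3 := lie_skew v y
      rw [hvkery] at h3
      exact neg_eq_zero.mp h3
    have hEFz0 : ⁅y, ⁅x, z + (c / 2) • y⁆⁆ = 0 := by
      rw [hveq, lie_sub, lie_sub, hEv0, hEk₀, lie_smul, lie_self, smul_zero]
      abel
    have h00 : ⁅x, z + (c / 2) • y⁆ = 0 := by
      refine hkerEF _ ?_ ⟨z + (c / 2) • y, ?_⟩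
      · rw [hE, LieAlgebra.ad_apply]
        exact hEFz0
      · rw [hF, LieAlgebra.ad_apply]
    have hv9 : v = k₀ + b • y := by
      have h9 : v - k₀ - b • y = 0 := by rw [← hveq, h00]
      rw [sub_sub] at h9
      exact sub_eq_zero.mp h9
    have hvS : v ∈ ⨆ i ≥ (-1 : ℤ), sFun g x i := by
      rw [hv9]
      refine Submodule.add_mem _ (GradeChunk.mem_iSup2 (by omega) hk₀S)
        (GradeChunk.mem_iSup2 (by omega : (-1 : ℤ) ≤ 1)
          (Submodule.smul_mem _ _ (SChunk.y_mem_s1 hh hhx hy hyx)))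
    exact (Submodule.mem_bot K).mpr (hinfSP v hvS hvperp)
  · -- GOAL 2 : the sum is 𝔭
    apply le_antisymm
    · refine sup_le ?_ (sup_le ?_ ?_)
      · exact le_trans inf_le_left inf_le_right
      · refine iSup₂_le fun i hi => ?_
        intro u hu
        exact GradeChunk.mem_iSup2 hi (SChunk.sFun_le_g hx i hu)
      · rw [Submodule.map_le_iff_le_comap]
        refine iSup₂_le fun i hi => ?_
        intro u hu
        simp only [Submodule.mem_comap]
        have h2 : F u = ⁅x, u⁆ := by rw [hF, LieAlgebra.ad_apply]
        rw [h2]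
        exact GradeChunk.mem_iSup2 (show (0 : ℤ) ≤ -1 + i by omega) (hbr (-1) i x hx u hu)
    · intro u hu
      refine GradeChunk.iSup2_induction
        (C := fun v => v ∈ (perpOf (killingForm K L) (⨆ i ≥ (-1 : ℤ), sFun g x i)
            ⊓ (⨆ i ≥ (0 : ℤ), g i) ⊓ kerRight y)
          ⊔ ((⨆ i ≥ (0 : ℤ), sFun g x i) ⊔ Submodule.map F (⨆ i ≥ (1 : ℤ), g i))) _ hu
        (fun i hi t ht => ?_) (Submodule.zero_mem _)
        (fun a b ha hb => Submodule.add_mem _ ha hb)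
      have h1 : t ∈ (⨆ i ≥ (-1 : ℤ), sFun g x i)
          ⊔ perpOf (killingForm K L) (⨆ i ≥ (-1 : ℤ), sFun g x i) := by
        rw [htop2]; trivial
      obtain ⟨s, hsS, m, hmPr, hts⟩ := Submodule.mem_sup.mp h1
      have h2 : m ∈ LinearMap.ker E ⊔ LinearMap.range F := by rw [htop1]; trivial
      obtain ⟨k, hk, w', hw', hmk⟩ := Submodule.mem_sup.mp h2
      obtain ⟨z, hzFz⟩ := hw'
      have h3 : k ∈ (⨆ i ≥ (-1 : ℤ), sFun g x i)
          ⊔ perpOf (killingForm K L) (⨆ i ≥ (-1 : ℤ), sFun g x i) := by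
        rw [htop2]; trivial
      obtain ⟨σ, hσ, k', hk', hkk⟩ := Submodule.mem_sup.mp h3
      have h4 : z ∈ (⨆ i ≥ (-1 : ℤ), sFun g x i)
          ⊔ perpOf (killingForm K L) (⨆ i ≥ (-1 : ℤ), sFun g x i) := by
        rw [htop2]; trivial
      obtain ⟨τ, hτ, z', hz', hzz⟩ := Submodule.mem_sup.mp h4
      have hFτ : F τ ∈ ⨆ i ≥ (-1 : ℤ), sFun g x i := by
        rw [hF, LieAlgebra.ad_apply]
        exact SChunk.lie_x_S hτ
      have hFz' : F z' ∈ perpOf (killingForm K L) (⨆ i ≥ (-1 : ℤ), sFun g x i) := by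
        rw [hF, LieAlgebra.ad_apply]
        exact SChunk.perp_lie (fun s hs => SChunk.lie_x_S hs) hz'
      have hEk'Pr : E k' ∈ perpOf (killingForm K L) (⨆ i ≥ (-1 : ℤ), sFun g x i) := by
        rw [hE, LieAlgebra.ad_apply]
        exact SChunk.perp_lie
          (fun s hs => SChunk.lie_y_S hh hhx hbr hx hy hyx hdsum hfin hnd hs) hk'
      have hEσS : E σ ∈ ⨆ i ≥ (-1 : ℤ), sFun g x i := by
        rw [hE, LieAlgebra.ad_apply]
        exact SChunk.lie_y_S hh hhx hbr hx hy hyx hdsum hfin hnd hσ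
      have hsum0 : σ + F τ = 0 := by
        refine hinfSP _ (Submodule.add_mem _ hσ hFτ) ?_
        have he1 : σ + F τ = m - k' - F z' := by
          rw [← hmk, ← hkk, ← hzFz, ← hzz, map_add]
          abel
        rw [he1]
        exact Submodule.sub_mem _ (Submodule.sub_mem _ hmPr hk') hFz'
      have hEk'0 : E k' = 0 := by
        have h5 : E σ + E k' = 0 := by
          rw [← map_add, hkk]
          exact LinearMap.mem_ker.mp hk
        have h6 : E σ = 0 := by
          refine hinfSP _ hEσS ?_
          rw [eq_neg_of_add_eq_zero_left h5]
          exact Submodule.neg_mem _ hEk'Pr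
        rw [h6, zero_add] at h5
        exact h5
      obtain ⟨a, b, s₀, hs₀, hsabc⟩ := SChunk.S_rep hh hhx hbr hx hy hyx hdsum hfin hnd hsS
      have hteq : t = (a • x + s₀ + b • y) + k' + F z' := by
        have he2 : t = s + ((σ + k') + (F τ + F z')) := by
          rw [← hts, ← hmk, ← hzFz, ← hzz, ← hkk, map_add]
        have he3 : t = (s + k' + F z') + (σ + F τ) := by rw [he2]; abel
        rw [he3, hsum0, add_zero, hsabc]
      have hgt : gproj hdsum i t = t := GradeChunk.gproj_same hdsum ht
      rw [← hgt, hteq]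
      simp only [map_add]
      have hgax : gproj hdsum i (a • x) = 0 :=
        GradeChunk.gproj_ne hdsum (show (-1 : ℤ) ≠ i by omega) (Submodule.smul_mem _ _ hx)
      have hgs₀ : gproj hdsum i s₀ ∈ ⨆ i ≥ (0 : ℤ), sFun g x i := by
        by_cases hi0 : (0 : ℤ) = i
        · subst hi0
          rw [GradeChunk.gproj_same hdsum (SChunk.sFun_le_g hx 0 hs₀)]
          exact GradeChunk.mem_iSup2 le_rfl hs₀
        · rw [GradeChunk.gproj_ne hdsum hi0 (SChunk.sFun_le_g hx 0 hs₀)]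
          exact Submodule.zero_mem _
      have hgby : gproj hdsum i (b • y) ∈ ⨆ i ≥ (0 : ℤ), sFun g x i := by
        by_cases hi1 : (1 : ℤ) = i
        · subst hi1
          rw [GradeChunk.gproj_same hdsum (Submodule.smul_mem _ _ hy)]
          exact GradeChunk.mem_iSup2 (by omega)
            (Submodule.smul_mem _ _ (SChunk.y_mem_s1 hh hhx hy hyx))
        · rw [GradeChunk.gproj_ne hdsum hi1 (Submodule.smul_mem _ _ hy)]
          exact Submodule.zero_mem _
      have hgk'W : gproj hdsum i k' ∈ perpOf (killingForm K L) (⨆ i ≥ (-1 : ℤ), sFun g x i)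
          ⊓ (⨆ i ≥ (0 : ℤ), g i) ⊓ kerRight y := by
        refine Submodule.mem_inf.mpr ⟨Submodule.mem_inf.mpr ⟨?_, ?_⟩, ?_⟩
        · exact SChunk.gproj_perp hbr hx hdsum hfin i hk'
        · exact GradeChunk.mem_iSup2 hi (GradeChunk.gproj_mem hdsum i k')
        · show ⁅gproj hdsum i k', y⁆ = 0
          have h7 := GradeChunk.gproj_comm hdsum E 1 hEmaps i k'
          rw [hEk'0, map_zero] at h7
          have h8 : ⁅y, gproj hdsum i k'⁆ = 0 := by
            have h9 : E (gproj hdsum i k') = 0 := h7.symm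
            rw [hE, LieAlgebra.ad_apply] at h9
            exact h9
          have h10 := lie_skew (gproj hdsum i k') y
          rw [← h10, h8, neg_zero]
      have hgFz : gproj hdsum i (F z') = F (gproj hdsum (i + 1) z') := by
        have h8 := GradeChunk.gproj_comm hdsum F (-1) hFmaps (i + 1) z'
        rw [show i + 1 + (-1) = i by ring] at h8
        exact h8
      rw [hgax, hgFz, zero_add]
      refine Submodule.add_mem _ (Submodule.add_mem _ (Submodule.add_mem _ ?_ ?_) ?_) ?_
      · exact Submodule.mem_sup_right (Submodule.mem_sup_left hgs₀)
      · exact Submodule.mem_sup_right (Submodule.mem_sup_left hgby)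
      · exact Submodule.mem_sup_left hgk'W
      · refine Submodule.mem_sup_right (Submodule.mem_sup_right ?_)
        exact Submodule.mem_map_of_mem
          (GradeChunk.mem_iSup2 (by omega) (GradeChunk.gproj_mem hdsum (i + 1) z'))

  · -- GOAL 3 : invariance
    intro u hu w hw
    obtain ⟨hw12, hwker⟩ := Submodule.mem_inf.mp hw
    obtain ⟨hwperp, hwP⟩ := Submodule.mem_inf.mp hw12
    have hwkery : ⁅w, y⁆ = 0 := hwker
    refine GradeChunk.iSup2_induction
      (C := fun u => ⁅u, w⁆ ∈ perpOf (killingForm K L) (⨆ i ≥ (-1 : ℤ), sFun g x i)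
        ⊓ (⨆ i ≥ (0 : ℤ), g i) ⊓ kerRight y) _ hu (fun i hi t ht => ?_) ?_ ?_
    · -- homogeneous piece
      rcases lt_trichotomy i 1 with hi1 | hi1 | hi1
      · -- i = 0
        have hi0 : i = 0 := by omega
        rw [hi0] at ht
        obtain ⟨c, hc⟩ : ∃ c : K, ⁅y, t⁆ = c • y := by
          have h1 := SChunk.E_s0_mem_s1 hh hhx hbr hy hyx ht
          rw [SChunk.sFun_one_eq hh hhx hbr hx hy hyx hdsum hfin hnd] at h1
          obtain ⟨c, hcc⟩ := Submodule.mem_span_singleton.mp h1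
          exact ⟨c, hcc.symm⟩
        refine Submodule.mem_inf.mpr ⟨Submodule.mem_inf.mpr ⟨?_, ?_⟩, ?_⟩
        · -- perp
          intro s hs
          have h1 : ⁅t, w⁆ = -⁅w, t⁆ := by rw [lie_skew]
          rw [h1, map_neg, LinearMap.neg_apply, neg_eq_zero,
            LieModule.traceForm_apply_lie_apply]
          refine hwperp _ ?_
          exact SChunk.lie_s0_S hh hhx hbr hx hy hyx hdsum hfin hnd ht hs
        · -- 𝔭
          exact hlieP 0 le_rfl t (SChunk.sFun_le_g hx 0 ht) w hwP
        · -- kernel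
          show ⁅⁅t, w⁆, y⁆ = 0
          have hleib := leibniz_lie t w y
          rw [hwkery, lie_zero] at hleib
          have h2 : ⁅t, y⁆ = -(c • y) := by
            have h3 := lie_skew y t
            rw [hc] at h3
            exact neg_eq_iff_eq_neg.mp h3
          have h4 : ⁅w, ⁅t, y⁆⁆ = 0 := by
            rw [h2, lie_neg, lie_smul, hwkery, smul_zero, neg_zero]
          rw [h4, add_zero] at hleib
          exact hleib.symm
      · -- i = 1
        rw [hi1, SChunk.sFun_one_eq hh hhx hbr hx hy hyx hdsum hfin hnd] at ht
        obtain ⟨c, hcc⟩ := Submodule.mem_span_singleton.mp ht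
        rw [← hcc]
        refine Submodule.mem_inf.mpr ⟨Submodule.mem_inf.mpr ⟨?_, ?_⟩, ?_⟩
        · intro s hs
          have h1 : ⁅c • y, w⁆ = -⁅w, c • y⁆ := by rw [lie_skew]
          rw [h1, map_neg, LinearMap.neg_apply, neg_eq_zero,
            LieModule.traceForm_apply_lie_apply]
          refine hwperp _ ?_
          have h5 : ⁅c • y, s⁆ = c • ⁅y, s⁆ := smul_lie c y s
          rw [h5]
          exact Submodule.smul_mem _ _
            (SChunk.lie_y_S hh hhx hbr hx hy hyx hdsum hfin hnd hs)
        · exact hlieP 1 (by omega) (c • y) (Submodule.smul_mem _ _ hy) w hwP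
        · show ⁅⁅c • y, w⁆, y⁆ = 0
          have hleib := leibniz_lie (c • y) w y
          rw [hwkery, lie_zero] at hleib
          have h4 : ⁅w, ⁅c • y, y⁆⁆ = 0 := by
            rw [smul_lie, lie_self, smul_zero, lie_zero]
          rw [h4, add_zero] at hleib
          exact hleib.symm
      · -- i ≥ 2
        rw [SChunk.sFun_bot_of_two_le hbr hx hdsum hfin hnd (by omega)] at ht
        simp only [Submodule.mem_bot] at ht
        rw [ht, zero_lie]
        exact Submodule.zero_mem _
    · show ⁅(0 : L), w⁆ ∈ _
      rw [zero_lie]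
      exact Submodule.zero_mem _
    · intro a b ha hb
      show ⁅a + b, w⁆ ∈ _
      rw [add_lie]
      exact Submodule.add_mem _ ha hb
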